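/- Under hypotheses (H1)–(H5), the scalar equation f₂(G) + q·G·f₄(τ₀·f₁(G)) = G_in + f₅(τ₀·f₁(G)) has exactly one solution G* with G* > 0. Consequently the delay system (MS) has exactly one positive equilibrium (I*, G*), where I* := τ₀·f₁(G*) > 0. -/

import Mathlib

open Filter Set

/-- Under (H1)-(H5), the equation f₂(G) + q·G·f₄(τ₀·f₁(G)) = G_in + f₅(τ₀·f₁(G)) has a
unique positive solution G*, and the delay system (MS) has exactly one positive
equilibrium (I*, G*) with I* = τ₀·f₁(G*). -/
theorem unique_positive_equilibrium
    (τ0 Gin q τ a0 a bbar d e hh : ℝ)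
    (f1 f2 f4 f5 f1' f2' f4' f5' : ℝ → ℝ)
    (hτ0 : 0 < τ0) (hGin : 0 < Gin) (hq : 0 < q) (hτ : 0 < τ)
    (hf1nn : ∀ u ≥ (0:ℝ), 0 ≤ f1 u) (hf2nn : ∀ u ≥ (0:ℝ), 0 ≤ f2 u)
    (hf4nn : ∀ u ≥ (0:ℝ), 0 ≤ f4 u) (hf5nn : ∀ u ≥ (0:ℝ), 0 ≤ f5 u)
    (hf1d : ∀ u ≥ (0:ℝ), HasDerivAt f1 (f1' u) u) (hf1c : ContinuousOn f1' (Set.Ici 0))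
    (hf2d : ∀ u ≥ (0:ℝ), HasDerivAt f2 (f2' u) u) (hf2c : ContinuousOn f2' (Set.Ici 0))
    (hf4d : ∀ u ≥ (0:ℝ), HasDerivAt f4 (f4' u) u) (hf4c : ContinuousOn f4' (Set.Ici 0))
    (hf5d : ∀ u ≥ (0:ℝ), HasDerivAt f5 (f5' u) u) (hf5c : ContinuousOn f5' (Set.Ici 0))
    (hf1pos : ∀ u > (0:ℝ), 0 < f1 u) (hf1inc : ∀ u > (0:ℝ), 0 < f1' u)
    (hf10 : f1 0 = a0) (ha0 : 0 < a0) (ha : 0 < a)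
    (hf1lim : Filter.Tendsto f1 Filter.atTop (nhds a))
    (hf2pos : ∀ u > (0:ℝ), 0 < f2 u) (hf2inc : ∀ u > (0:ℝ), 0 < f2' u)
    (hf20 : f2 0 = 0) (hbbar : 0 < bbar)
    (hf2lim : Filter.Tendsto f2 Filter.atTop (nhds bbar))
    (hf4pos : ∀ u > (0:ℝ), 0 < f4 u) (hf4inc : ∀ u > (0:ℝ), 0 < f4' u)
    (hf40 : f4 0 = d) (hd : 0 < d) (he : 0 < e)
    (hf4lim : Filter.Tendsto f4 Filter.atTop (nhds e))
    (hf5pos : ∀ u > (0:ℝ), 0 < f5 u) (hf5dec : ∀ u > (0:ℝ), f5' u < 0)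
    (hf50 : f5 0 = hh) (hhh : 0 < hh)
    (hf5lim : Filter.Tendsto f5 Filter.atTop (nhds 0)) :
    (∃! Gs : ℝ, 0 < Gs ∧ f2 Gs + q * Gs * f4 (τ0 * f1 Gs) = Gin + f5 (τ0 * f1 Gs)) ∧
    (∃! p : ℝ × ℝ, 0 < p.1 ∧ 0 < p.2 ∧ f1 p.2 = p.1 / τ0 ∧
      f2 p.2 + q * p.2 * f4 p.1 = Gin + f5 p.1) := by
  -- the scalar function
  set g : ℝ → ℝ := fun G => f2 G + q * G * f4 (τ0 * f1 G) - f5 (τ0 * f1 G) with hg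
  -- derivative of g
  set D : ℝ → ℝ := fun x => f2' x + (q * f4 (τ0 * f1 x)
      + q * x * (f4' (τ0 * f1 x) * (τ0 * f1' x)))
      - f5' (τ0 * f1 x) * (τ0 * f1' x) with hD
  have hgd : ∀ x ≥ (0:ℝ), HasDerivAt g (D x) x := by
    intro x hx
    have harg : (0:ℝ) ≤ τ0 * f1 x := mul_nonneg hτ0.le (hf1nn x hx)
    have hcomp : HasDerivAt (fun G => τ0 * f1 G) (τ0 * f1' x) x :=
      (hf1d x hx).const_mul τ0
    have h4 : HasDerivAt (fun G => f4 (τ0 * f1 G)) (f4' (τ0 * f1 x) * (τ0 * f1' x)) x :=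
      (hf4d _ harg).comp x hcomp
    have h5 : HasDerivAt (fun G => f5 (τ0 * f1 G)) (f5' (τ0 * f1 x) * (τ0 * f1' x)) x :=
      (hf5d _ harg).comp x hcomp
    have hqx : HasDerivAt (fun G : ℝ => q * G) q x := by
      simpa using (hasDerivAt_id x).const_mul q
    have hprod := hqx.mul h4
    have := ((hf2d x hx).add hprod).sub h5
    convert this using 1 <;> rfl
  have hgc : ContinuousOn g (Ici 0) := fun x hx =>
    ((hgd x hx).continuousAt).continuousWithinAt
  -- f1 monotone on Ici 0
  have hf1m : StrictMonoOn f1 (Ici 0) := by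
    refine strictMonoOn_of_deriv_pos (convex_Ici 0)
      (fun x hx => ((hf1d x hx).continuousAt).continuousWithinAt) ?_
    intro x hx
    rw [interior_Ici] at hx
    rw [(hf1d x (le_of_lt hx)).deriv]
    exact hf1inc x hx
  have hf4m : StrictMonoOn f4 (Ici 0) := by
    refine strictMonoOn_of_deriv_pos (convex_Ici 0)
      (fun x hx => ((hf4d x hx).continuousAt).continuousWithinAt) ?_
    intro x hx
    rw [interior_Ici] at hx
    rw [(hf4d x (le_of_lt hx)).deriv]
    exact hf4inc x hx
  have hf5a : StrictAntiOn f5 (Ici 0) := by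
    refine strictAntiOn_of_deriv_neg (convex_Ici 0)
      (fun x hx => ((hf5d x hx).continuousAt).continuousWithinAt) ?_
    intro x hx
    rw [interior_Ici] at hx
    rw [(hf5d x (le_of_lt hx)).deriv]
    exact hf5dec x hx
  -- g strictly monotone on Ici 0
  have hgm : StrictMonoOn g (Ici 0) := by
    refine strictMonoOn_of_deriv_pos (convex_Ici 0) hgc ?_
    intro x hx
    rw [interior_Ici] at hx
    rw [(hgd x hx.le).deriv]
    have hf1x : 0 < f1 x := hf1pos x hx
    have hargpos : 0 < τ0 * f1 x := mul_pos hτ0 hf1x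
    have h1 : 0 < f2' x := hf2inc x hx
    have h2 : 0 < q * f4 (τ0 * f1 x) := mul_pos hq (hf4pos _ hargpos)
    have h3 : 0 < q * x * (f4' (τ0 * f1 x) * (τ0 * f1' x)) :=
      mul_pos (mul_pos hq hx) (mul_pos (hf4inc _ hargpos) (mul_pos hτ0 (hf1inc x hx)))
    have h4 : f5' (τ0 * f1 x) * (τ0 * f1' x) < 0 :=
      mul_neg_of_neg_of_pos (hf5dec _ hargpos) (mul_pos hτ0 (hf1inc x hx))
    simp only [hD]
    linarith
  -- key values
  have hc : 0 < f4 (τ0 * a0) := hf4pos _ (mul_pos hτ0 ha0)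
  have hg0 : g 0 = -f5 (τ0 * a0) := by simp [hg, hf20, hf10]
  have hg0lt : g 0 < Gin := by
    have : 0 ≤ f5 (τ0 * a0) := hf5nn _ (mul_pos hτ0 ha0).le
    rw [hg0]; linarith
  -- large value M
  set M : ℝ := max 1 ((Gin + f5 (τ0 * a0)) / (q * f4 (τ0 * a0))) with hM
  have hM1 : (1:ℝ) ≤ M := le_max_left _ _
  have hM0 : (0:ℝ) ≤ M := by linarith
  have hgM : Gin ≤ g M := by
    have hf1M : a0 ≤ f1 M := by
      rcases eq_or_lt_of_le hM0 with h | h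
      · rw [← h, hf10]
      · rw [← hf10]; exact (hf1m (Set.mem_Ici.2 (le_refl (0:ℝ))) hM0 h).le
    have hargM : τ0 * a0 ≤ τ0 * f1 M := by nlinarith
    have h4M : f4 (τ0 * a0) ≤ f4 (τ0 * f1 M) := by
      rcases eq_or_lt_of_le hargM with h | h
      · rw [h]
      · exact (hf4m (mul_pos hτ0 ha0).le ((mul_pos hτ0 ha0).le.trans hargM) h).le
    have h5M : f5 (τ0 * f1 M) ≤ f5 (τ0 * a0) := by
      rcases eq_or_lt_of_le hargM with h | h
      · rw [h]
      · exact (hf5a (mul_pos hτ0 ha0).le ((mul_pos hτ0 ha0).le.trans hargM) h).le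
    have hMge : (Gin + f5 (τ0 * a0)) / (q * f4 (τ0 * a0)) ≤ M := le_max_right _ _
    have hqc : 0 < q * f4 (τ0 * a0) := mul_pos hq hc
    have hMprod : Gin + f5 (τ0 * a0) ≤ M * (q * f4 (τ0 * a0)) :=
      (div_le_iff₀ hqc).mp hMge
    have hf2M : 0 ≤ f2 M := hf2nn M hM0
    have h4nn : 0 ≤ f4 (τ0 * a0) := hc.le
    have : q * M * f4 (τ0 * a0) ≤ q * M * f4 (τ0 * f1 M) := by
      apply mul_le_mul_of_nonneg_left h4M
      positivity
    simp only [hg]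
    nlinarith
  -- existence via IVT
  obtain ⟨Gs, hGsmem, hGseq⟩ := intermediate_value_Icc hM0
    (hgc.mono (Icc_subset_Ici_self)) ⟨hg0lt.le, hgM⟩
  have hGspos : 0 < Gs := by
    rcases eq_or_lt_of_le hGsmem.1 with h | h
    · exfalso; rw [← h] at hGseq; linarith
    · exact h
  have hGsIci : Gs ∈ Ici (0:ℝ) := hGspos.le
  have key : ∀ y : ℝ, 0 < y →
      ((f2 y + q * y * f4 (τ0 * f1 y) = Gin + f5 (τ0 * f1 y)) ↔ g y = Gin) := by
    intro y hy
    simp only [hg]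
    constructor <;> intro h <;> linarith
  have hGsol : f2 Gs + q * Gs * f4 (τ0 * f1 Gs) = Gin + f5 (τ0 * f1 Gs) := by
    rw [key Gs hGspos]; exact hGseq
  have huniq : ∀ y : ℝ, 0 < y ∧
      f2 y + q * y * f4 (τ0 * f1 y) = Gin + f5 (τ0 * f1 y) → y = Gs := by
    rintro y ⟨hy, hyeq⟩
    have : g y = g Gs := by rw [hGseq, ← key y hy]; exact hyeq
    exact hgm.injOn hy.le hGsIci this
  constructor
  · exact ⟨Gs, ⟨hGspos, hGsol⟩, huniq⟩
  · refine ⟨(τ0 * f1 Gs, Gs), ⟨mul_pos hτ0 (hf1pos Gs hGspos), hGspos, ?_, hGsol⟩, ?_⟩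
    · field_simp
    · rintro ⟨I, G⟩ ⟨hI, hG, hIG, heq⟩
      simp only at hI hG hIG heq ⊢
      have hIval : I = τ0 * f1 G := by
        field_simp at hIG
        linarith
      rw [hIval] at heq
      have hGeq : G = Gs := huniq G ⟨hG, heq⟩
      rw [Prod.mk.injEq]
      exact ⟨by rw [hIval, hGeq], hGeq⟩
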